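/- Let G1, G2 be groups and φ : G1 → G2 a bijection such that a multiset over G1 is a product-one sequence over G1 if and only if its termwise image under φ is a product-one sequence over G2. Then for every g in G1 and every integer n, φ(gⁿ) = φ(g)ⁿ. -/
import Mathlib


/-- A multiset `S` over a group `G` is a *product-one sequence* if its terms can be
ordered so that their product is `1`. -/
def IsProductOne {G : Type*} [Group G] (S : Multiset G) : Prop :=
  ∃ l : List G, (l : Multiset G) = S ∧ l.prod = 1

/-- The monoid `B(G)` of product-one sequences over `G`, as a submonoid of the free
abelian monoid (finite multisets under addition) over `G`. -/
def ProductOneSubmonoid (G : Type*) [Group G] : AddSubmonoid (Multiset G) where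
  carrier := {S | IsProductOne S}
  zero_mem' := ⟨[], rfl, rfl⟩
  add_mem' := by
    rintro a b ⟨l1, rfl, p1⟩ ⟨l2, rfl, p2⟩
    exact ⟨l1 ++ l2, by simp, by simp [p1, p2]⟩

lemma key_prod {G : Type*} [Group G] (c x : G) :
    ∀ (l : List G) (n : ℕ), (↑l : Multiset G) = x ::ₘ Multiset.replicate n c →
      ∃ a b : ℕ, a + b = n ∧ l.prod = c ^ a * x * c ^ b := by
  intro l
  induction l with
  | nil =>
    intro n hn
    exfalso
    have : x ∈ (↑([] : List G) : Multiset G) := by rw [hn]; simp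
    simp at this
  | cons hd t ih =>
    intro n hn
    have hcoe : (↑(hd :: t) : Multiset G) = hd ::ₘ (↑t : Multiset G) := rfl
    rw [hcoe] at hn
    have hmem : hd ∈ x ::ₘ Multiset.replicate n c := by rw [← hn]; simp
    rcases Multiset.mem_cons.mp hmem with h1 | h2
    · subst h1
      have ht : (↑t : Multiset G) = Multiset.replicate n c :=
        (Multiset.cons_inj_right _).mp hn
      have hall : ∀ y ∈ t, y = c := by
        intro y hy
        have : y ∈ (↑t : Multiset G) := by simpa using hy
        rw [ht] at this
        exact Multiset.eq_of_mem_replicate this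
      have hlen : t.length = n := by
        have := congrArg Multiset.card ht
        simpa using this
      refine ⟨0, n, by ring, ?_⟩
      rw [List.prod_cons, List.prod_eq_pow_card t c hall, hlen]
      group
    · have hc : hd = c := Multiset.eq_of_mem_replicate h2
      rw [hc] at hn ⊢
      obtain ⟨m, rfl⟩ : ∃ m, n = m + 1 := by
        cases n with
        | zero => simp at h2
        | succ m => exact ⟨m, rfl⟩
      have hn' : (↑t : Multiset G) = x ::ₘ Multiset.replicate m c := by
        have : c ::ₘ (↑t : Multiset G) = c ::ₘ x ::ₘ Multiset.replicate m c := by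
          rw [hn, Multiset.replicate_succ, Multiset.cons_swap]
        exact (Multiset.cons_inj_right _).mp this
      obtain ⟨a, b, hab, hp⟩ := ih m hn'
      refine ⟨a + 1, b, by omega, ?_⟩
      rw [List.prod_cons, hp]
      rw [pow_succ']
      group

lemma key_eq {G : Type*} [Group G] {c x : G} {n : ℕ}
    (h : IsProductOne (x ::ₘ Multiset.replicate n c)) : x = (c ^ n)⁻¹ := by
  obtain ⟨l, hl, hp⟩ := h
  obtain ⟨a, b, hab, hprod⟩ := key_prod c x l n hl
  rw [hprod] at hp
  have h1 : c ^ a * x = (c ^ b)⁻¹ := mul_eq_one_iff_eq_inv.mp hp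
  have h2 : x = (c ^ a)⁻¹ * (c ^ b)⁻¹ := eq_inv_mul_iff_mul_eq.mpr h1
  rw [h2, ← mul_inv_rev, ← pow_add]
  rw [show b + a = n by omega]

theorem A3_powers (G1 G2 : Type*) [Group G1] [Group G2]
    (φ : G1 → G2) (hbij : Function.Bijective φ)
    (h : ∀ S : Multiset G1, IsProductOne S ↔ IsProductOne (S.map φ)) :
    ∀ (g : G1) (n : ℤ), φ (g ^ n) = (φ g) ^ n := by
  -- φ(g⁻¹) = (φ g)⁻¹
  have hinv : ∀ g : G1, φ g⁻¹ = (φ g)⁻¹ := by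
    intro g
    have hS : IsProductOne (g⁻¹ ::ₘ Multiset.replicate 1 g) :=
      ⟨[g⁻¹, g], rfl, by simp⟩
    have := (h _).mp hS
    rw [Multiset.map_cons, Multiset.map_replicate] at this
    have := key_eq this
    simpa using this
  -- natural number powers
  have hnat : ∀ (g : G1) (n : ℕ), φ (g ^ n) = (φ g) ^ n := by
    intro g n
    have hS : IsProductOne (g ^ n ::ₘ Multiset.replicate n g⁻¹) := by
      refine ⟨g ^ n :: List.replicate n g⁻¹, ?_, ?_⟩
      · simp [Multiset.replicate]
      · simp [List.prod_replicate]
    have := (h _).mp hS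
    rw [Multiset.map_cons, Multiset.map_replicate, hinv] at this
    have := key_eq this
    rw [this, inv_pow, inv_inv]
  intro g n
  cases n with
  | ofNat m => simpa using hnat g m
  | negSucc m =>
    rw [zpow_negSucc, zpow_negSucc, hinv, hnat]
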